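/- Let μ > 0 and K > 0. There exists a constant C > 0 (depending only on μ, K, and the constants C₁⁰, C₂⁰) such that the following holds: for any 0 ≤ s ≤ t, any ε ∈ (0,K], any r ∈ (0,1), and any measurable function g : [s,t] → ℝ with |g(τ)| ≤ ε·e^{−μτ} for all τ ∈ [s,t], the point T := F_*^{-1}(F_*(r) + ∫_s^t g(τ)dτ) satisfies |T − r| ≤ C·ε·(e^{−μs} − e^{−μt})·r(1−r). -/

import Mathlib

open Real MeasureTheory intervalIntegral Set

noncomputable def Gaux (x : ℝ) : ℝ := Real.log x - Real.log (1 - x)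

lemma Gaux_hasDerivAt {x : ℝ} (hx : x ∈ Set.Ioo (0:ℝ) 1) :
    HasDerivAt Gaux (1 / (x * (1 - x))) x := by
  obtain ⟨h0, h1⟩ := hx
  have hx1 : (0:ℝ) < 1 - x := by linarith
  have d1 : HasDerivAt Real.log x⁻¹ x := Real.hasDerivAt_log h0.ne'
  have d2 : HasDerivAt (fun y : ℝ => 1 - y) (-1) x := by
    simpa using (hasDerivAt_id x).const_sub (1:ℝ)
  have d3 : HasDerivAt (fun y : ℝ => Real.log (1 - y)) ((1 - x)⁻¹ * (-1)) x :=
    (Real.hasDerivAt_log hx1.ne').comp x d2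
  have := d1.sub d3
  convert this using 1
  all_goals try rfl
  field_simp
  ring

lemma Gaux_mono {a b : ℝ} (ha : a ∈ Set.Ioo (0:ℝ) 1) (hb : b ∈ Set.Ioo (0:ℝ) 1)
    (hab : a ≤ b) : Gaux a ≤ Gaux b := by
  unfold Gaux
  have h1 : Real.log a ≤ Real.log b := Real.log_le_log ha.1 hab
  have h2 : Real.log (1 - b) ≤ Real.log (1 - a) := by
    apply Real.log_le_log (by linarith [hb.2]) (by linarith)
  linarith

lemma Gaux_mvt {a b : ℝ} (ha : a ∈ Set.Ioo (0:ℝ) 1) (hb : b ∈ Set.Ioo (0:ℝ) 1)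
    (hab : a < b) :
    ∃ ξ ∈ Set.Ioo a b, b - a = (Gaux b - Gaux a) * (ξ * (1 - ξ)) := by
  have hsub : Set.Ioo a b ⊆ Set.Ioo (0:ℝ) 1 :=
    fun x hx => ⟨lt_trans ha.1 hx.1, lt_trans hx.2 hb.2⟩
  have hcont : ContinuousOn Gaux (Set.Icc a b) := by
    intro x hx
    have hx' : x ∈ Set.Ioo (0:ℝ) 1 := ⟨lt_of_lt_of_le ha.1 hx.1, lt_of_le_of_lt hx.2 hb.2⟩
    exact ((Gaux_hasDerivAt hx').continuousAt).continuousWithinAt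
  obtain ⟨ξ, hξ, heq⟩ := exists_hasDerivAt_eq_slope Gaux (fun x => 1 / (x * (1 - x))) hab
    hcont (fun x hx => Gaux_hasDerivAt (hsub hx))
  refine ⟨ξ, hξ, ?_⟩
  have hξ' := hsub hξ
  have hρ : 0 < ξ * (1 - ξ) := mul_pos hξ'.1 (by linarith [hξ'.2])
  rw [eq_div_iff (by linarith : b - a ≠ 0)] at heq
  field_simp at heq
  rw [div_eq_iff hρ.ne'] at heq
  nlinarith [heq]

lemma rho_comp {x y M : ℝ} (hx : x ∈ Set.Ioo (0:ℝ) 1) (hy : y ∈ Set.Ioo (0:ℝ) 1)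
    (hM : 0 ≤ M) (h1 : Gaux x - Gaux y ≤ M) (h2 : Gaux y - Gaux x ≤ M) :
    x * (1 - x) ≤ Real.exp M * (y * (1 - y)) := by
  obtain ⟨hx0, hx1⟩ := hx; obtain ⟨hy0, hy1⟩ := hy
  have hx1' : (0:ℝ) < 1 - x := by linarith
  have hy1' : (0:ℝ) < 1 - y := by linarith
  have hE1 : (1:ℝ) ≤ Real.exp M := Real.one_le_exp hM
  -- A := x*(1-y), B := y*(1-x)
  have h1' : x * (1 - y) ≤ Real.exp M * (y * (1 - x)) := by
    have : Real.log (x * (1 - y)) ≤ M + Real.log (y * (1 - x)) := by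
      rw [Real.log_mul hx0.ne' hy1'.ne', Real.log_mul hy0.ne' hx1'.ne']
      unfold Gaux at h1; linarith
    calc x * (1 - y) = Real.exp (Real.log (x * (1 - y))) :=
          (Real.exp_log (mul_pos hx0 hy1')).symm
      _ ≤ Real.exp (M + Real.log (y * (1 - x))) := Real.exp_le_exp.2 this
      _ = Real.exp M * (y * (1 - x)) := by
          rw [Real.exp_add, Real.exp_log (mul_pos hy0 hx1')]
  have h2' : y * (1 - x) ≤ Real.exp M * (x * (1 - y)) := by
    have : Real.log (y * (1 - x)) ≤ M + Real.log (x * (1 - y)) := by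
      rw [Real.log_mul hx0.ne' hy1'.ne', Real.log_mul hy0.ne' hx1'.ne']
      unfold Gaux at h2; linarith
    calc y * (1 - x) = Real.exp (Real.log (y * (1 - x))) :=
          (Real.exp_log (mul_pos hy0 hx1')).symm
      _ ≤ Real.exp (M + Real.log (x * (1 - y))) := Real.exp_le_exp.2 this
      _ = Real.exp M * (x * (1 - y)) := by
          rw [Real.exp_add, Real.exp_log (mul_pos hx0 hy1')]
  set E := Real.exp M with hE
  set A := x * (1 - y) with hA
  set B := y * (1 - x) with hB
  have p1 : A * ((1 - x) * (1 - y)) ≤ E * B * ((1 - x) * (1 - y)) :=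
    mul_le_mul_of_nonneg_right h1' (by positivity)
  have p3 : B * (x * y) ≤ E * A * (x * y) :=
    mul_le_mul_of_nonneg_right h2' (by positivity)
  have p2 : A * B ≤ E * (A * B) := le_mul_of_one_le_left (by positivity) hE1
  have id1 : x * (1 - x) = A * ((1 - x) * (1 - y)) + 2 * (A * B) + B * (x * y) := by
    rw [hA, hB]; ring
  have id2 : E * (y * (1 - y)) = E * B * ((1 - x) * (1 - y)) + 2 * (E * (A * B)) + E * A * (x * y) := by
    rw [hA, hB]; ring
  linarith

lemma integral_exp_neg_mul {μ s t : ℝ} (hμ : 0 < μ) :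
    ∫ τ in s..t, Real.exp (-μ * τ) = (Real.exp (-μ * s) - Real.exp (-μ * t)) / μ := by
  have hd : ∀ τ ∈ Set.uIcc s t, HasDerivAt (fun τ => -Real.exp (-μ * τ) / μ)
      (Real.exp (-μ * τ)) τ := by
    intro τ _
    have d1 : HasDerivAt (fun τ : ℝ => -μ * τ) (-μ) τ := by
      simpa using (hasDerivAt_id τ).const_mul (-μ)
    have d2 : HasDerivAt (fun τ : ℝ => Real.exp (-μ * τ)) (Real.exp (-μ * τ) * (-μ)) τ :=
      (Real.hasDerivAt_exp _).comp τ d1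
    have := (d2.neg).div_const μ
    convert this using 1
    all_goals try rfl
    field_simp
  have hi : IntervalIntegrable (fun τ => Real.exp (-μ * τ)) volume s t :=
    (Continuous.intervalIntegrable (by continuity) s t)
  rw [intervalIntegral.integral_eq_sub_of_hasDerivAt hd hi]
  field_simp
  ring

lemma integral_one_div_rho {a b : ℝ} (ha : a ∈ Set.Ioo (0:ℝ) 1) (hb : b ∈ Set.Ioo (0:ℝ) 1) :
    ∫ η in a..b, 1 / (η * (1 - η)) = Gaux b - Gaux a := by
  have hsub : Set.uIcc a b ⊆ Set.Ioo (0:ℝ) 1 := Set.ordConnected_Ioo.uIcc_subset ha hb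
  have hcont : ContinuousOn (fun η : ℝ => 1 / (η * (1 - η))) (Set.uIcc a b) := by
    apply ContinuousOn.div continuousOn_const
    · fun_prop
    · intro x hx
      obtain ⟨h0, h1⟩ := hsub hx
      exact (mul_pos h0 (by linarith)).ne'
  rw [intervalIntegral.integral_eq_sub_of_hasDerivAt
    (fun x hx => Gaux_hasDerivAt (hsub hx)) (hcont.intervalIntegrable)]

lemma F_comp (u F : ℝ → ℝ) (C10 C20 : ℝ) (hC10 : 0 < C10) (hC20 : 0 < C20)
    (hu : ContinuousOn u (Set.Icc 0 1))
    (hu_lb : ∀ r ∈ Set.Icc (0:ℝ) 1, -C10 * (r * (1 - r)) ≤ u r)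
    (hu_ub : ∀ r ∈ Set.Icc (0:ℝ) 1, u r ≤ -C20 * (r * (1 - r)))
    (hF : ∀ r ∈ Set.Ioo (0:ℝ) 1, F r = ∫ η in (1/2 : ℝ)..r, 1 / |u η|)
    {a b : ℝ} (ha : a ∈ Set.Ioo (0:ℝ) 1) (hb : b ∈ Set.Ioo (0:ℝ) 1) (hab : a ≤ b) :
    Gaux b - Gaux a ≤ C10 * (F b - F a) ∧ C20 * (F b - F a) ≤ Gaux b - Gaux a := by
  have hIoo : Set.Ioo (0:ℝ) 1 ⊆ Set.Icc 0 1 := Set.Ioo_subset_Icc_self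
  -- facts about u on Ioo 0 1
  have hu_neg : ∀ η ∈ Set.Ioo (0:ℝ) 1, u η < 0 := by
    intro η hη
    have := hu_ub η (hIoo hη)
    have hρ : 0 < η * (1 - η) := mul_pos hη.1 (by linarith [hη.2])
    nlinarith
  have hu_int : ∀ c ∈ Set.Ioo (0:ℝ) 1, ∀ d ∈ Set.Ioo (0:ℝ) 1,
      IntervalIntegrable (fun η => 1 / |u η|) volume c d := by
    intro c hc d hd
    have hsub : Set.uIcc c d ⊆ Set.Ioo (0:ℝ) 1 := Set.ordConnected_Ioo.uIcc_subset hc hd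
    apply ContinuousOn.intervalIntegrable
    apply ContinuousOn.div continuousOn_const
    · exact ((hu.mono (hsub.trans hIoo)).abs)
    · intro x hx
      exact abs_ne_zero.2 (hu_neg x (hsub hx)).ne
  have hhalf : (1/2 : ℝ) ∈ Set.Ioo (0:ℝ) 1 := by norm_num
  have hFd : F b - F a = ∫ η in a..b, 1 / |u η| := by
    rw [hF a ha, hF b hb]
    exact intervalIntegral.integral_interval_sub_left (hu_int _ hhalf _ hb)
      (hu_int _ hhalf _ ha)
  have hsub : Set.Icc a b ⊆ Set.Ioo (0:ℝ) 1 := Set.Icc_subset_Ioo ha.1 hb.2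
  have hρ_int : IntervalIntegrable (fun η : ℝ => 1 / (η * (1 - η))) volume a b := by
    apply ContinuousOn.intervalIntegrable
    apply ContinuousOn.div continuousOn_const (by fun_prop)
    intro x hx
    obtain ⟨h0, h1⟩ := (Set.uIcc_of_le hab ▸ hsub) hx
    exact (mul_pos h0 (by linarith)).ne'
  have hbnd : ∀ η ∈ Set.Icc a b, C20 * (η * (1 - η)) ≤ |u η| ∧ |u η| ≤ C10 * (η * (1 - η)) := by
    intro η hη
    have hη' := hsub hη
    have h1 := hu_lb η (hIoo hη')
    have h2 := hu_ub η (hIoo hη')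
    rw [abs_of_neg (hu_neg η hη')]
    constructor <;> linarith
  constructor
  · have := intervalIntegral.integral_mono_on hab hρ_int (hu_int _ ha _ hb |>.const_mul C10)
      (fun η hη => by
        obtain ⟨hl, hr⟩ := hbnd η hη
        have hη' := hsub hη
        have hρ : 0 < η * (1 - η) := mul_pos hη'.1 (by linarith [hη'.2])
        have hu0 : 0 < |u η| := lt_of_lt_of_le (by positivity) hl
        rw [mul_one_div, div_le_div_iff₀ hρ hu0]
        nlinarith)
    rw [integral_one_div_rho ha hb, intervalIntegral.integral_const_mul] at this
    rw [hFd]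
    linarith
  · have := intervalIntegral.integral_mono_on hab (hu_int _ ha _ hb |>.const_mul C20) hρ_int
      (fun η hη => by
        obtain ⟨hl, hr⟩ := hbnd η hη
        have hη' := hsub hη
        have hρ : 0 < η * (1 - η) := mul_pos hη'.1 (by linarith [hη'.2])
        have hu0 : 0 < |u η| := lt_of_lt_of_le (by positivity) hl
        rw [mul_one_div, div_le_div_iff₀ hu0 hρ]
        nlinarith)
    rw [integral_one_div_rho ha hb, intervalIntegral.integral_const_mul] at this
    rw [hFd]
    linarith

lemma key_est {a b M : ℝ} (ha : a ∈ Set.Ioo (0:ℝ) 1) (hb : b ∈ Set.Ioo (0:ℝ) 1)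
    (hab : a < b) (hM : 0 ≤ M) (hGM : Gaux b - Gaux a ≤ M)
    {r : ℝ} (hr : r = a ∨ r = b) :
    b - a ≤ (Gaux b - Gaux a) * (Real.exp M * (r * (1 - r))) := by
  obtain ⟨ξ, hξab, hξ⟩ := Gaux_mvt ha hb hab
  have hsub : Set.Ioo a b ⊆ Set.Ioo (0:ℝ) 1 :=
    fun x hx => ⟨lt_trans ha.1 hx.1, lt_trans hx.2 hb.2⟩
  have hξm : ξ ∈ Set.Ioo (0:ℝ) 1 := hsub hξab
  have hrm : r ∈ Set.Ioo (0:ℝ) 1 := by rcases hr with h | h <;> rw [h] <;> assumption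
  have hGξa : Gaux a ≤ Gaux ξ := Gaux_mono ha hξm hξab.1.le
  have hGξb : Gaux ξ ≤ Gaux b := Gaux_mono hξm hb hξab.2.le
  have hcomp : ξ * (1 - ξ) ≤ Real.exp M * (r * (1 - r)) := by
    apply rho_comp hξm hrm hM
    · rcases hr with h | h <;> rw [h] <;> linarith
    · rcases hr with h | h <;> rw [h] <;> linarith
  have hG0 : 0 ≤ Gaux b - Gaux a := by linarith
  rw [hξ]
  exact mul_le_mul_of_nonneg_left hcomp hG0

theorem stmt_5
    (u F Finv : ℝ → ℝ) (C10 C20 : ℝ)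
    (hC10 : 0 < C10) (hC20 : 0 < C20)
    (hu : ContDiffOn ℝ 1 u (Set.Icc 0 1))
    (hu_lb : ∀ r ∈ Set.Icc (0:ℝ) 1, -C10 * (r * (1 - r)) ≤ u r)
    (hu_ub : ∀ r ∈ Set.Icc (0:ℝ) 1, u r ≤ -C20 * (r * (1 - r)))
    (hF : ∀ r ∈ Set.Ioo (0:ℝ) 1, F r = ∫ η in (1/2 : ℝ)..r, 1 / |u η|)
    (hF_mono : StrictMonoOn F (Set.Ioo 0 1))
    (hFinv_mem : ∀ x : ℝ, Finv x ∈ Set.Ioo (0:ℝ) 1)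
    (hFinv_right : ∀ x : ℝ, F (Finv x) = x)
    (hFinv_left : ∀ r ∈ Set.Ioo (0:ℝ) 1, Finv (F r) = r)
    (μ K : ℝ) (hμ : 0 < μ) (hK : 0 < K) :
    ∃ C : ℝ, 0 < C ∧
      ∀ s t : ℝ, 0 ≤ s → s ≤ t →
      ∀ ε : ℝ, ε ∈ Set.Ioc 0 K →
      ∀ r ∈ Set.Ioo (0:ℝ) 1,
      ∀ g : ℝ → ℝ, Measurable g →
        (∀ τ ∈ Set.Icc s t, |g τ| ≤ ε * Real.exp (-μ * τ)) →
        |Finv (F r + ∫ τ in s..t, g τ) - r| ≤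
          C * ε * (Real.exp (-μ * s) - Real.exp (-μ * t)) * (r * (1 - r)) := by
  set M := C10 * K / μ with hMdef
  have hM0 : 0 ≤ M := by positivity
  refine ⟨Real.exp M * C10 / μ, by positivity, ?_⟩
  intro s t hs hst ε hε r hr g hg hgb
  set D := Real.exp (-μ * s) - Real.exp (-μ * t) with hDdef
  set I := ∫ τ in s..t, g τ with hIdef
  set T := Finv (F r + I) with hTdef
  have hTm : T ∈ Set.Ioo (0:ℝ) 1 := hFinv_mem _
  have hFT : F T - F r = I := by rw [hTdef, hFinv_right]; ring
  have hD0 : 0 ≤ D := by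
    rw [hDdef, sub_nonneg]
    exact Real.exp_le_exp.2 (by nlinarith)
  have hD1 : D ≤ 1 := by
    have h1 : Real.exp (-μ * s) ≤ 1 := Real.exp_le_one_iff.2 (by nlinarith)
    have h2 : 0 < Real.exp (-μ * t) := Real.exp_pos _
    rw [hDdef]; linarith
  -- bound on |I|
  have hcμ : Continuous (fun τ : ℝ => ε * Real.exp (-μ * τ)) :=
    continuous_const.mul (Real.continuous_exp.comp (continuous_const.mul continuous_id))
  have hbi : IntervalIntegrable (fun τ => ε * Real.exp (-μ * τ)) volume s t :=
    hcμ.intervalIntegrable s t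
  have hgi : IntervalIntegrable g volume s t := by
    rw [intervalIntegrable_iff_integrableOn_Icc_of_le hst]
    refine MeasureTheory.Integrable.mono'
      (hcμ.integrableOn_Icc :
        IntegrableOn (fun τ => ε * Real.exp (-μ * τ)) (Set.Icc s t) volume)
      hg.aestronglyMeasurable ?_
    rw [MeasureTheory.ae_restrict_iff' measurableSet_Icc]
    exact Filter.Eventually.of_forall (fun τ hτ => by simpa using hgb τ hτ)
  have hIb : |I| ≤ ε * D / μ := by
    have h1 : |I| ≤ ∫ τ in s..t, |g τ| :=
      intervalIntegral.abs_integral_le_integral_abs hst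
    have h2 : (∫ τ in s..t, |g τ|) ≤ ∫ τ in s..t, ε * Real.exp (-μ * τ) :=
      intervalIntegral.integral_mono_on hst hgi.abs hbi (fun τ hτ => hgb τ hτ)
    have h3 : (∫ τ in s..t, ε * Real.exp (-μ * τ)) = ε * D / μ := by
      rw [intervalIntegral.integral_const_mul, integral_exp_neg_mul hμ, hDdef]
      ring
    linarith
  have hcomp := fun {a b : ℝ} (ha : a ∈ Set.Ioo (0:ℝ) 1) (hb : b ∈ Set.Ioo (0:ℝ) 1)
    (hab : a ≤ b) => F_comp u F C10 C20 hC10 hC20 hu.continuousOn hu_lb hu_ub hF ha hb hab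
  have h1 : ε * D ≤ K := by nlinarith [hε.1, hε.2]
  have hεD : C10 * (ε * D / μ) ≤ M := by
    rw [hMdef]
    calc C10 * (ε * D / μ) = C10 * (ε * D) / μ := by ring
      _ ≤ C10 * K / μ := by gcongr
  have hIabs : C10 * |I| ≤ M := le_trans (mul_le_mul_of_nonneg_left hIb hC10.le) hεD
  have hρr : 0 ≤ r * (1 - r) := by nlinarith [hr.1, hr.2]
  have hρpos : 0 ≤ Real.exp M * (r * (1 - r)) :=
    mul_nonneg (Real.exp_pos M).le hρr
  rcases lt_trichotomy T r with hlt | heq | hgt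
  · have hGd : Gaux r - Gaux T ≤ C10 * |I| := by
      have h := (hcomp hTm hr hlt.le).1
      have hFr : F r - F T = -I := by linarith
      rw [hFr] at h
      nlinarith [mul_le_mul_of_nonneg_left (neg_le_abs I) hC10.le]
    have hGM : Gaux r - Gaux T ≤ M := hGd.trans hIabs
    have hkey := key_est hTm hr hlt hM0 hGM (Or.inr rfl)
    rw [abs_of_neg (by linarith : T - r < 0)]
    have hstep : (Gaux r - Gaux T) * (Real.exp M * (r * (1 - r))) ≤
        (C10 * (ε * D / μ)) * (Real.exp M * (r * (1 - r))) := by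
      apply mul_le_mul_of_nonneg_right _ hρpos
      exact hGd.trans (mul_le_mul_of_nonneg_left hIb hC10.le)
    have hring : (C10 * (ε * D / μ)) * (Real.exp M * (r * (1 - r))) =
        Real.exp M * C10 / μ * ε * D * (r * (1 - r)) := by ring
    linarith
  · rw [heq, sub_self, abs_zero]
    exact mul_nonneg (mul_nonneg (mul_nonneg (by positivity) hε.1.le) hD0) hρr
  · have hGd : Gaux T - Gaux r ≤ C10 * |I| := by
      have h := (hcomp hr hTm hgt.le).1
      rw [hFT] at h
      nlinarith [mul_le_mul_of_nonneg_left (le_abs_self I) hC10.le]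
    have hGM : Gaux T - Gaux r ≤ M := hGd.trans hIabs
    have hkey := key_est hr hTm hgt hM0 hGM (Or.inl rfl)
    rw [abs_of_pos (by linarith : 0 < T - r)]
    have hstep : (Gaux T - Gaux r) * (Real.exp M * (r * (1 - r))) ≤
        (C10 * (ε * D / μ)) * (Real.exp M * (r * (1 - r))) := by
      apply mul_le_mul_of_nonneg_right _ hρpos
      exact hGd.trans (mul_le_mul_of_nonneg_left hIb hC10.le)
    have hring : (C10 * (ε * D / μ)) * (Real.exp M * (r * (1 - r))) =
        Real.exp M * C10 / μ * ε * D * (r * (1 - r)) := by ring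
    linarith
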